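/- Let S = ℝ² with coordinates (x, y) and define the 2-form Ω_{nh} = dx∧dp_x + dy∧dp_y − (y p_x/(1+y²)) dx∧dy on T*ℝ² (the case a = 0 of the nonholonomic particle). Then the 2-form Ω̄ := (1+y²)^{−1/2} Ω_{nh} is closed, and in the coordinates (x, y, p̃_x, p̃_y) with p̃_x = (1+y²)^{−1/2} p_x, p̃_y = (1+y²)^{−1/2} p_y, one has Ω̄ = dx∧dp̃_x + dy∧dp̃_y. -/

import Mathlib

open BigOperators

noncomputable section

/-- Exterior derivative of a 2-form (coordinate formula, on constant vectors). -/
def d2 {E : Type*} [NormedAddCommGroup E] [NormedSpace ℝ E]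
    (Ω : E → E → E → ℝ) : E → E → E → E → ℝ :=
  fun x u v w => fderiv ℝ (fun y => Ω y v w) x u
    - fderiv ℝ (fun y => Ω y u w) x v + fderiv ℝ (fun y => Ω y u v) x w

/-- Wedge product of two 1-forms. -/
def wedge11 {E : Type*} (α β : E → E → ℝ) : E → E → E → ℝ :=
  fun x u v => α x u * β x v - α x v * β x u

/-- The 2-form `Ω_{nh} = dx∧dp_x + dy∧dp_y − (y p_x/(1+y²)) dx∧dy` on
`T*ℝ² ≅ ℝ⁴` with coordinates `(x, y, p_x, p_y) = (q 0, q 1, q 2, q 3)`. -/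
def Omnh : (Fin 4 → ℝ) → (Fin 4 → ℝ) → (Fin 4 → ℝ) → ℝ := fun q u v =>
  (u 0 * v 2 - v 0 * u 2) + (u 1 * v 3 - v 1 * u 3)
    - q 1 * q 2 / (1 + q 1 ^ 2) * (u 0 * v 1 - v 0 * u 1)

/-- `Ω̄ = (1+y²)^{−1/2} Ω_{nh}`. -/
def Ombar : (Fin 4 → ℝ) → (Fin 4 → ℝ) → (Fin 4 → ℝ) → ℝ := fun q u v =>
  (1 + q 1 ^ 2) ^ (-(1 : ℝ) / 2) * Omnh q u v

namespace Stmt14Aux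

/-- The conformal factor. -/
def g (t : ℝ) : ℝ := (1 + t ^ 2) ^ (-(1 : ℝ) / 2)

/-- Its derivative. -/
def g1 (t : ℝ) : ℝ := -t * (1 + t ^ 2) ^ (-(3 : ℝ) / 2)

/-- Its second derivative. -/
def g2 (t : ℝ) : ℝ := -(1 + t ^ 2) ^ (-(3 : ℝ) / 2) + 3 * t ^ 2 * (1 + t ^ 2) ^ (-(5 : ℝ) / 2)

lemma hpos (t : ℝ) : (0 : ℝ) < 1 + t ^ 2 := by positivity

lemma hg (t : ℝ) : HasDerivAt g (g1 t) t := by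
  have h1 : HasDerivAt (fun s : ℝ => 1 + s ^ 2) (2 * t) t := by
    simpa using ((hasDerivAt_pow 2 t).const_add 1)
  have h := (Real.hasDerivAt_rpow_const (x := 1 + t ^ 2) (p := -(1 : ℝ) / 2)
    (Or.inl (hpos t).ne')).comp t h1
  refine (show HasDerivAt g _ t from h).congr_deriv ?_
  symm
  show g1 t = (-(1 : ℝ) / 2 * (1 + t ^ 2) ^ (-(1 : ℝ) / 2 - 1)) * (2 * t)
  have : (-(1 : ℝ) / 2 - 1) = -(3 : ℝ) / 2 := by norm_num
  rw [this]; unfold g1; ring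

lemma hg1 (t : ℝ) : HasDerivAt g1 (g2 t) t := by
  have h1 : HasDerivAt (fun s : ℝ => 1 + s ^ 2) (2 * t) t := by
    simpa using ((hasDerivAt_pow 2 t).const_add 1)
  have h := (Real.hasDerivAt_rpow_const (x := 1 + t ^ 2) (p := -(3 : ℝ) / 2)
    (Or.inl (hpos t).ne')).comp t h1
  have hid : HasDerivAt (fun s : ℝ => -s) (-1 : ℝ) t := (hasDerivAt_id t).neg
  have H := hid.mul h
  refine (show HasDerivAt g1 _ t from H).congr_deriv ?_
  symm
  show g2 t = (-1) * (1 + t ^ 2) ^ (-(3 : ℝ) / 2)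
      + (-t) * ((-(3 : ℝ) / 2 * (1 + t ^ 2) ^ (-(3 : ℝ) / 2 - 1)) * (2 * t))
  have h32 : (-(3 : ℝ) / 2 - 1) = -(5 : ℝ) / 2 := by norm_num
  rw [h32]; unfold g2; ring

set_option linter.unusedTactic false in
/-- Key relation: `g1 t = -t/(1+t²) · g t`. -/
lemma g1_eq (t : ℝ) : g1 t = -(t / (1 + t ^ 2)) * g t := by
  unfold g g1
  have h : (-(3 : ℝ) / 2) = (-(1 : ℝ) / 2) + (-1 : ℝ) := by norm_num
  rw [h, Real.rpow_add (hpos t), Real.rpow_neg_one]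
  field_simp

def A (u v : Fin 4 → ℝ) : ℝ := (u 0 * v 2 - v 0 * u 2) + (u 1 * v 3 - v 1 * u 3)
def B (u v : Fin 4 → ℝ) : ℝ := u 0 * v 1 - v 0 * u 1

lemma Ombar_eq (q u v : Fin 4 → ℝ) :
    Ombar q u v = g (q 1) * A u v + g1 (q 1) * q 2 * B u v := by
  unfold Ombar Omnh A B
  rw [g1_eq]
  unfold g
  have := (hpos (q 1)).ne'
  field_simp
  ring

lemma fderiv_key (A' B' : ℝ) (q u : Fin 4 → ℝ) :
    fderiv ℝ (fun z : Fin 4 → ℝ => g (z 1) * A' + g1 (z 1) * z 2 * B') q u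
      = g1 (q 1) * u 1 * A' + (g2 (q 1) * q 2 * u 1 + g1 (q 1) * u 2) * B' := by
  have hp1 : HasFDerivAt (fun z : Fin 4 → ℝ => z 1)
      (ContinuousLinearMap.proj 1 : (Fin 4 → ℝ) →L[ℝ] ℝ) q :=
    hasFDerivAt_apply 1 q
  have hp2 : HasFDerivAt (fun z : Fin 4 → ℝ => z 2)
      (ContinuousLinearMap.proj 2 : (Fin 4 → ℝ) →L[ℝ] ℝ) q :=
    hasFDerivAt_apply 2 q
  have hgq := (hg (q 1)).comp_hasFDerivAt q hp1
  have hg1q := (hg1 (q 1)).comp_hasFDerivAt q hp1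
  have H := (hgq.mul_const A').add ((hg1q.mul hp2).mul_const B')
  simp only [Function.comp_def] at H
  rw [HasFDerivAt.fderiv (f := fun z : Fin 4 → ℝ => g (z 1) * A' + g1 (z 1) * z 2 * B') H]
  simp [ContinuousLinearMap.proj]
  ring

lemma fderiv_ptilde (i : Fin 4) (q u : Fin 4 → ℝ) :
    fderiv ℝ (fun z : Fin 4 → ℝ => (1 + z 1 ^ 2) ^ (-(1 : ℝ) / 2) * z i) q u
      = g1 (q 1) * u 1 * q i + g (q 1) * u i := by
  have hp1 : HasFDerivAt (fun z : Fin 4 → ℝ => z 1)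
      (ContinuousLinearMap.proj 1 : (Fin 4 → ℝ) →L[ℝ] ℝ) q :=
    hasFDerivAt_apply 1 q
  have hpi : HasFDerivAt (fun z : Fin 4 → ℝ => z i)
      (ContinuousLinearMap.proj i : (Fin 4 → ℝ) →L[ℝ] ℝ) q :=
    hasFDerivAt_apply i q
  have hgq := (hg (q 1)).comp_hasFDerivAt q hp1
  have H := hgq.mul hpi
  simp only [Function.comp_def] at H
  rw [show (fun z : Fin 4 → ℝ => (1 + z 1 ^ 2) ^ (-(1 : ℝ) / 2) * z i)
      = (fun z : Fin 4 → ℝ => g (z 1) * z i) from rfl]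
  rw [HasFDerivAt.fderiv (f := fun z : Fin 4 → ℝ => g (z 1) * z i) H]
  simp [ContinuousLinearMap.proj]
  ring

end Stmt14Aux

open Stmt14Aux in
/-- `Ω̄` is closed, and in the rescaled momenta `p̃_x = (1+y²)^{−1/2} p_x`,
`p̃_y = (1+y²)^{−1/2} p_y` one has `Ω̄ = dx∧dp̃_x + dy∧dp̃_y`. -/
theorem stmt14 :
    (∀ q u v w, d2 Ombar q u v w = 0) ∧
      (∀ q u v, Ombar q u v =
        wedge11 (fun _ s => s 0)
          (fun p s => fderiv ℝ (fun z : Fin 4 → ℝ => (1 + z 1 ^ 2) ^ (-(1 : ℝ) / 2) * z 2) p s)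
          q u v
        + wedge11 (fun _ s => s 1)
          (fun p s => fderiv ℝ (fun z : Fin 4 → ℝ => (1 + z 1 ^ 2) ^ (-(1 : ℝ) / 2) * z 3) p s)
          q u v) := by
  constructor
  · intro q u v w
    unfold d2
    simp only [Ombar_eq, fderiv_key]
    unfold A B
    ring
  · intro q u v
    unfold wedge11
    simp only [fderiv_ptilde, Ombar_eq]
    unfold A B
    ring
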